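/- Assume (A1). Let f_0 ∈ H_1, u = (u_m)_{m≥0} a positive decreasing sequence, C > 0, r a nonnegative integer, and 0 < K ≤ 1. Set C* = C_{f_0}(K,u,C,r) ∩ V_m^⊥ for an integer m ≥ r. Then sup{ ‖f‖_H : f ∈ C*, f_0 + f ∈ H_1 and f_0 − f ∈ H_1 } ≤ C·u_m, and sup{ ‖f‖_H : f ∈ C*, f_0 + f ∈ H_1 and f_0 − f ∈ H_1 } ≥ min{ C·u_{m+1}, K / K_{∞,f_0}(V_{m+2} ⊖ V_m) }, where V_{m+2} ⊖ V_m = V_{m+2} ∩ V_m^⊥. -/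

import Mathlib

open MeasureTheory ENNReal

noncomputable section

/-- Weighted essential sup norm `‖f‖_{∞,f₀} = ν-ess sup |f|/f₀`. -/
def wnorm {α : Type*} [MeasurableSpace α] {ν : Measure α} (f f₀ : Lp ℝ 2 ν) : ℝ≥0∞ :=
  essSup (fun θ => ENNReal.ofReal |f θ| / ENNReal.ofReal (f₀ θ)) ν

/-- `K_{∞,f₀}(V)`. -/
def Kinf {α : Type*} [MeasurableSpace α] {ν : Measure α} (f₀ : Lp ℝ 2 ν)
    (V : Set (Lp ℝ 2 ν)) : ℝ≥0∞ :=
  ⨆ (g : Lp ℝ 2 ν) (_ : g ∈ V ∧ ‖g‖ = 1), wnorm g f₀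

/-- `V_m = span(Π 1_k, 0 ≤ k < m)`. -/
def Vspan {α : Type*} [MeasurableSpace α] {ν : Measure α} (Pi1 : ℕ → Lp ℝ 2 ν) (m : ℕ) :
    Submodule ℝ (Lp ℝ 2 ν) :=
  Submodule.span ℝ (Pi1 '' Set.Iio m)

/-- The approximation class `C(u,C,r)`. -/
def classV {α : Type*} [MeasurableSpace α] {ν : Measure α} (Pi1 : ℕ → Lp ℝ 2 ν)
    (u : ℕ → ℝ) (C : ℝ) (r : ℕ) : Set (Lp ℝ 2 ν) :=
  {f | ∀ m, r ≤ m → Metric.infDist f (Vspan Pi1 m : Set (Lp ℝ 2 ν)) ≤ C * u m}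

/-- Probability densities belonging to `H`. -/
def H1 {α : Type*} [MeasurableSpace α] (ν : Measure α) : Set (Lp ℝ 2 ν) :=
  {f | 0 ≤ᵐ[ν] ⇑f ∧ ∫ θ, f θ ∂ν = 1}

lemma norm_le_infDist_of_orth {E : Type*} [NormedAddCommGroup E] [InnerProductSpace ℝ E]
    (V : Submodule ℝ E) (f : E) (hf : f ∈ Vᗮ) : ‖f‖ ≤ Metric.infDist f (V : Set E) := by
  by_contra h
  push_neg at h
  obtain ⟨g, hg, hlt⟩ := (Metric.infDist_lt_iff ⟨0, V.zero_mem⟩).1 h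
  rw [dist_eq_norm] at hlt
  have h0 : (inner ℝ f g) = 0 := by
    rw [real_inner_comm]; exact (V.mem_orthogonal f).1 hf g hg
  have hsq : ‖f - g‖ ^ 2 = ‖f‖ ^ 2 - 2 * (inner ℝ f g) + ‖g‖ ^ 2 := norm_sub_sq_real f g
  nlinarith [norm_nonneg (f - g), norm_nonneg f, norm_nonneg g]

lemma integrable_of_mem_span {α : Type*} [MeasurableSpace α] {ν : Measure α}
    (Pi1 : ℕ → Lp ℝ 2 ν) (hint : ∀ k, Integrable (⇑(Pi1 k)) ν)
    (M : ℕ) (f : Lp ℝ 2 ν) (hf : f ∈ Vspan Pi1 M) :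
    Integrable (⇑f) ν := by
  induction hf using Submodule.span_induction with
  | mem x hx => obtain ⟨k, -, rfl⟩ := hx; exact hint k
  | zero => exact (integrable_zero _ _ _).congr (Lp.coeFn_zero ℝ 2 ν).symm
  | add x y hx hy ihx ihy => exact (ihx.add ihy).congr (Lp.coeFn_add x y).symm
  | smul a x hx ih => exact (ih.smul a).congr (Lp.coeFn_smul a x).symm

lemma wnorm_smul' {α : Type*} [MeasurableSpace α] {ν : Measure α}
    (f f₀ : Lp ℝ 2 ν) {t : ℝ} (ht : 0 ≤ t) :
    wnorm (t • f) f₀ = ENNReal.ofReal t * wnorm f f₀ := by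
  unfold wnorm
  rw [← ENNReal.essSup_const_mul]
  refine essSup_congr_ae ?_
  filter_upwards [Lp.coeFn_smul t f] with θ hθ
  rw [hθ]
  simp only [Pi.smul_apply, smul_eq_mul, abs_mul, abs_of_nonneg ht,
    ENNReal.ofReal_mul ht, mul_div_assoc]

theorem statement5
    {d : ℕ} {Θ : Set (Fin d → ℝ)} (hΘ : MeasurableSet Θ)
    (ν : Measure Θ) [SigmaFinite ν]
    (π : Θ → ℕ → ℝ)
    (hπ_meas : ∀ k, Measurable fun θ => π θ k)
    (hπ_nonneg : ∀ θ k, 0 ≤ π θ k)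
    (hπ_sum : ∀ θ, HasSum (fun k => π θ k) 1)
    -- (A1)
    (Pi1 : ℕ → Lp ℝ 2 ν) (hPi1 : ∀ k, ⇑(Pi1 k) =ᵐ[ν] fun θ => π θ k)
    (hPi1_int : ∀ k, Integrable (fun θ => π θ k) ν)
    (hPi1_li : LinearIndependent ℝ Pi1)
    -- data
    (f₀ : Lp ℝ 2 ν) (hf₀ : f₀ ∈ H1 ν)
    (u : ℕ → ℝ) (hu_pos : ∀ m', 0 < u m') (hu_dec : Antitone u)
    (C : ℝ) (hC : 0 < C) (r : ℕ) (K : ℝ) (hK_pos : 0 < K) (hK_le : K ≤ 1)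
    (m : ℕ) (hm : r ≤ m) :
    sSup {x : ℝ | ∃ f : Lp ℝ 2 ν,
        f ∈ classV Pi1 u C r ∧ wnorm f f₀ ≤ ENNReal.ofReal K ∧
        f ∈ ((Vspan Pi1 m)ᗮ : Submodule ℝ (Lp ℝ 2 ν)) ∧
        f₀ + f ∈ H1 ν ∧ f₀ - f ∈ H1 ν ∧ x = ‖f‖}
      ≤ C * u m ∧
    (min (ENNReal.ofReal (C * u (m + 1)))
        (ENNReal.ofReal K /
          Kinf f₀ ((Vspan Pi1 (m + 2) ⊓ (Vspan Pi1 m)ᗮ : Submodule ℝ (Lp ℝ 2 ν)) :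
            Set (Lp ℝ 2 ν)))).toReal
      ≤ sSup {x : ℝ | ∃ f : Lp ℝ 2 ν,
          f ∈ classV Pi1 u C r ∧ wnorm f f₀ ≤ ENNReal.ofReal K ∧
          f ∈ ((Vspan Pi1 m)ᗮ : Submodule ℝ (Lp ℝ 2 ν)) ∧
          f₀ + f ∈ H1 ν ∧ f₀ - f ∈ H1 ν ∧ x = ‖f‖} := by
  classical
  set S : Set ℝ := {x : ℝ | ∃ f : Lp ℝ 2 ν,
      f ∈ classV Pi1 u C r ∧ wnorm f f₀ ≤ ENNReal.ofReal K ∧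
      f ∈ ((Vspan Pi1 m)ᗮ : Submodule ℝ (Lp ℝ 2 ν)) ∧
      f₀ + f ∈ H1 ν ∧ f₀ - f ∈ H1 ν ∧ x = ‖f‖} with hSdef
  have hintk : ∀ k, Integrable (⇑(Pi1 k)) ν := fun k => (hPi1_int k).congr (hPi1 k).symm
  have hspanint : ∀ M (f : Lp ℝ 2 ν), f ∈ Vspan Pi1 M → Integrable (⇑f) ν :=
    fun M f hf => integrable_of_mem_span Pi1 hintk M f hf
  -- upper bound
  have hub : ∀ x ∈ S, x ≤ C * u m := by
    rintro x ⟨f, hfc, -, hforth, -, -, rfl⟩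
    exact (norm_le_infDist_of_orth _ f hforth).trans (hfc m hm)
  have hbdd : BddAbove S := ⟨C * u m, fun x hx => hub x hx⟩
  have hCu : 0 ≤ C * u m := mul_nonneg hC.le (hu_pos m).le
  refine ⟨Real.sSup_le hub hCu, ?_⟩
  -- the witness
  haveI : FiniteDimensional ℝ (Vspan Pi1 (m + 2)) := by
    unfold Vspan
    exact FiniteDimensional.span_of_finite ℝ ((Set.finite_Iio (m + 2)).image Pi1)
  let I : Vspan Pi1 (m + 2) →ₗ[ℝ] ℝ :=
    { toFun := fun f => ∫ θ, (f : Lp ℝ 2 ν) θ ∂ν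
      map_add' := fun f g => by
        simp only [Submodule.coe_add]
        rw [integral_congr_ae (Lp.coeFn_add _ _)]
        simp only [Pi.add_apply]
        exact integral_add (hspanint _ _ f.2) (hspanint _ _ g.2)
      map_smul' := fun c f => by
        simp only [SetLike.val_smul, RingHom.id_apply]
        rw [integral_congr_ae (Lp.coeFn_smul _ _)]
        simp only [Pi.smul_apply, smul_eq_mul]
        rw [integral_const_mul] }
  let φ1 : Vspan Pi1 (m + 2) →ₗ[ℝ] (Fin m → ℝ) :=
    LinearMap.pi fun k : Fin m =>
      ((innerSL ℝ (Pi1 k)).toLinearMap).comp (Vspan Pi1 (m + 2)).subtype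
  let φ : Vspan Pi1 (m + 2) →ₗ[ℝ] (Fin m → ℝ) × ℝ := φ1.prod I
  have hfr : m + 2 ≤ Module.finrank ℝ (Vspan Pi1 (m + 2)) := by
    have hli : LinearIndependent ℝ
        (fun k : Fin (m + 2) =>
          (⟨Pi1 k, Submodule.subset_span ⟨(k : ℕ), k.2, rfl⟩⟩ : Vspan Pi1 (m + 2))) := by
      apply LinearIndependent.of_comp (Vspan Pi1 (m + 2)).subtype
      exact hPi1_li.comp (fun k : Fin (m + 2) => (k : ℕ)) Fin.val_injective
    simpa using hli.fintype_card_le_finrank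
  have hker : LinearMap.ker φ ≠ ⊥ := by
    intro hbot
    have hinj := LinearMap.ker_eq_bot.1 hbot
    have hle := LinearMap.finrank_le_finrank_of_injective hinj
    rw [Module.finrank_prod, Module.finrank_fin_fun, Module.finrank_self] at hle
    omega
  obtain ⟨g₀, hg₀ker, hg₀ne⟩ := (Submodule.ne_bot_iff _).1 hker
  have h0 : φ g₀ = 0 := LinearMap.mem_ker.1 hg₀ker
  have hint0 : ∫ θ, (g₀ : Lp ℝ 2 ν) θ ∂ν = 0 := congrArg Prod.snd h0
  have hperp : ∀ k < m, (inner ℝ (Pi1 k) ((g₀ : Lp ℝ 2 ν))) = 0 := by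
    intro k hk
    have h1 : φ1 g₀ = 0 := congrArg Prod.fst h0
    have h2 := congrFun h1 ⟨k, hk⟩
    simpa [φ1, LinearMap.pi_apply] using h2
  have hg₀orth : (g₀ : Lp ℝ 2 ν) ∈ (Vspan Pi1 m)ᗮ := by
    rw [Submodule.mem_orthogonal]
    intro v hv
    induction hv using Submodule.span_induction with
    | mem x hx => obtain ⟨k, hk, rfl⟩ := hx; exact hperp k hk
    | zero => exact inner_zero_left _
    | add x y hx hy ihx ihy => rw [inner_add_left, ihx, ihy, add_zero]
    | smul a x hx ih => rw [real_inner_smul_left, ih, mul_zero]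
  have hg0ne' : ((g₀ : Lp ℝ 2 ν)) ≠ 0 := fun h => hg₀ne (Submodule.coe_eq_zero.1 h)
  have hnorm0 : ‖(g₀ : Lp ℝ 2 ν)‖ ≠ 0 := norm_ne_zero_iff.2 hg0ne'
  set gv : Lp ℝ 2 ν := (‖(g₀ : Lp ℝ 2 ν)‖⁻¹ : ℝ) • (g₀ : Lp ℝ 2 ν) with hgvdef
  have hgvnorm : ‖gv‖ = 1 := by
    rw [hgvdef, norm_smul, norm_inv, norm_norm, inv_mul_cancel₀ hnorm0]
  have hgvmem : gv ∈ Vspan Pi1 (m + 2) := Submodule.smul_mem _ _ g₀.2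
  have hgvorth : gv ∈ (Vspan Pi1 m)ᗮ := Submodule.smul_mem _ _ hg₀orth
  have hgvW : gv ∈ (Vspan Pi1 (m + 2) ⊓ (Vspan Pi1 m)ᗮ : Submodule ℝ (Lp ℝ 2 ν)) :=
    Submodule.mem_inf.2 ⟨hgvmem, hgvorth⟩
  have hgvint : Integrable (⇑gv) ν := hspanint (m + 2) gv hgvmem
  have hgvint0 : ∫ θ, gv θ ∂ν = 0 := by
    rw [integral_congr_ae (Lp.coeFn_smul _ _)]
    simp only [Pi.smul_apply, smul_eq_mul]
    rw [integral_const_mul, hint0, mul_zero]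
  have hwle : wnorm gv f₀ ≤
      Kinf f₀ ((Vspan Pi1 (m + 2) ⊓ (Vspan Pi1 m)ᗮ : Submodule ℝ (Lp ℝ 2 ν)) :
        Set (Lp ℝ 2 ν)) := by
    exact le_iSup₂ (f := fun (g : Lp ℝ 2 ν)
      (_ : g ∈ ((Vspan Pi1 (m + 2) ⊓ (Vspan Pi1 m)ᗮ : Submodule ℝ (Lp ℝ 2 ν)) :
        Set (Lp ℝ 2 ν)) ∧ ‖g‖ = 1) => wnorm g f₀) gv ⟨hgvW, hgvnorm⟩
  set A : ℝ≥0∞ := ENNReal.ofReal (C * u (m + 1)) with hAdef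
  set B : ℝ≥0∞ := ENNReal.ofReal K /
      Kinf f₀ ((Vspan Pi1 (m + 2) ⊓ (Vspan Pi1 m)ᗮ : Submodule ℝ (Lp ℝ 2 ν)) :
        Set (Lp ℝ 2 ν)) with hBdef
  set t : ℝ := (min A B).toReal with htdef
  have htnn : 0 ≤ t := ENNReal.toReal_nonneg
  have hAne : A ≠ ⊤ := ofReal_ne_top
  have hminne : min A B ≠ ⊤ := ne_top_of_le_ne_top hAne (min_le_left _ _)
  have hofreal_t : ENNReal.ofReal t = min A B := ENNReal.ofReal_toReal hminne
  set f : Lp ℝ 2 ν := t • gv with hfdef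
  have hfnorm : ‖f‖ = t := by
    rw [hfdef, norm_smul, hgvnorm, mul_one, Real.norm_eq_abs, abs_of_nonneg htnn]
  have hwf : wnorm f f₀ ≤ ENNReal.ofReal K := by
    rw [hfdef, wnorm_smul' _ _ htnn, hofreal_t]
    calc min A B * wnorm gv f₀ ≤ B * wnorm gv f₀ :=
          mul_le_mul_left (min_le_right _ _) _
      _ ≤ (ENNReal.ofReal K / wnorm gv f₀) * wnorm gv f₀ :=
          mul_le_mul_left (ENNReal.div_le_div_left hwle _) _
      _ ≤ ENNReal.ofReal K := by
          rcases eq_or_ne (wnorm gv f₀) 0 with h | h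
          · simp [h]
          · rcases eq_or_ne (wnorm gv f₀) ⊤ with h' | h'
            · simp [h']
            · rw [ENNReal.div_mul_cancel h h']
  have htle : t ≤ C * u (m + 1) := by
    have h1 : t ≤ (ENNReal.ofReal (C * u (m + 1))).toReal :=
      ENNReal.toReal_mono hAne (min_le_left A B)
    rwa [ENNReal.toReal_ofReal (mul_nonneg hC.le (hu_pos _).le)] at h1
  have hVmono : ∀ a b : ℕ, a ≤ b → Vspan Pi1 a ≤ Vspan Pi1 b := fun a b h =>
    Submodule.span_mono (Set.image_mono (Set.Iio_subset_Iio h))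
  have hfcl : f ∈ classV Pi1 u C r := by
    intro m' hm'
    rcases le_or_gt (m + 2) m' with h2 | h2
    · have hmem : f ∈ Vspan Pi1 m' := hVmono _ _ h2 (Submodule.smul_mem _ _ hgvmem)
      rw [Metric.infDist_zero_of_mem hmem]
      exact mul_nonneg hC.le (hu_pos m').le
    · have h3 : m' ≤ m + 1 := by omega
      calc Metric.infDist f (Vspan Pi1 m' : Set (Lp ℝ 2 ν)) ≤ dist f 0 :=
            Metric.infDist_le_dist_of_mem (Submodule.zero_mem _)
        _ = ‖f‖ := by rw [dist_zero_right]
        _ = t := hfnorm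
        _ ≤ C * u (m + 1) := htle
        _ ≤ C * u m' := mul_le_mul_of_nonneg_left (hu_dec h3) hC.le
  have hforth : f ∈ (Vspan Pi1 m)ᗮ := Submodule.smul_mem _ _ hgvorth
  -- a.e. domination
  have hae : ∀ᵐ θ ∂ν, ENNReal.ofReal |f θ| / ENNReal.ofReal (f₀ θ) ≤ ENNReal.ofReal K := by
    have hle := ENNReal.ae_le_essSup
      (f := fun θ => ENNReal.ofReal |f θ| / ENNReal.ofReal (f₀ θ)) (μ := ν)
    filter_upwards [hle] with θ h using h.trans hwf
  have habs : ∀ᵐ θ ∂ν, |f θ| ≤ f₀ θ ∧ 0 ≤ f₀ θ := by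
    filter_upwards [hae, hf₀.1] with θ h1 h2
    refine ⟨?_, h2⟩
    have h3 : ENNReal.ofReal |f θ| ≤ ENNReal.ofReal K * ENNReal.ofReal (f₀ θ) :=
      (ENNReal.div_le_iff_le_mul (Or.inr ofReal_ne_top) (Or.inl ofReal_ne_top)).1 h1
    rw [← ENNReal.ofReal_mul hK_pos.le] at h3
    have h4 : |f θ| ≤ K * f₀ θ :=
      (ENNReal.ofReal_le_ofReal_iff (mul_nonneg hK_pos.le h2)).1 h3
    nlinarith [mul_nonneg (sub_nonneg.2 hK_le) h2]
  have hf₀int : Integrable (⇑f₀) ν := by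
    by_contra hni
    have h2 := hf₀.2
    rw [integral_undef hni] at h2
    exact one_ne_zero h2.symm
  have hfint : Integrable (⇑f) ν := (hgvint.smul t).congr (Lp.coeFn_smul t gv).symm
  have hfint0 : ∫ θ, f θ ∂ν = 0 := by
    rw [hfdef, integral_congr_ae (Lp.coeFn_smul _ _)]
    simp only [Pi.smul_apply, smul_eq_mul]
    rw [integral_const_mul, hgvint0, mul_zero]
  have hplus : f₀ + f ∈ H1 ν := by
    constructor
    · filter_upwards [Lp.coeFn_add f₀ f, habs] with θ h1 h2
      rw [h1]
      simp only [Pi.add_apply, Pi.zero_apply]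
      have := abs_le.1 h2.1
      linarith [this.1]
    · rw [integral_congr_ae (Lp.coeFn_add _ _)]
      simp only [Pi.add_apply]
      rw [integral_add hf₀int hfint, hf₀.2, hfint0, add_zero]
  have hminus : f₀ - f ∈ H1 ν := by
    constructor
    · filter_upwards [Lp.coeFn_sub f₀ f, habs] with θ h1 h2
      rw [h1]
      simp only [Pi.sub_apply, Pi.zero_apply]
      have := abs_le.1 h2.1
      linarith [this.2]
    · rw [integral_congr_ae (Lp.coeFn_sub _ _)]
      simp only [Pi.sub_apply]
      rw [integral_sub hf₀int hfint, hf₀.2, hfint0, sub_zero]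
  have htS : t ∈ S := ⟨f, hfcl, hwf, hforth, hplus, hminus, hfnorm.symm⟩
  exact le_csSup hbdd htS

end
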